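/- Let ρ > 0, h > 0 with ρh < 1, λ ∈ [0, 1/h]. Let U, V : ℕ → ℝ be bounded with U_k ≤ V_k for all k, and let (q₁, q₂), (m₁, m₂) ∈ ℝ² with θ := q_j − m_j = max(q₁ − m₁, q₂ − m₂) ≥ 0. Define, for a set C ⊆ [0,∞), F(q, q̄, W) = ρq − (1−ρh)λ(q̄ − q) − sup_{c ∈ C} { u(c) + (1−ρh)(1−λh)(1/h)(Σ_k β_k(c) W_k − q) }, where u : [0,∞) → ℝ ∪ {−∞} and for each c the weights satisfy β_k(c) ≥ 0 and Σ_k β_k(c) = 1, and the supremum is finite. Then F(q_j, q_{3−j}, U + θ) − F(m_j, m_{3−j}, V) ≥ ρθ. -/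
import Mathlib


open Set

/-- The SL scheme operator for one component:
`F(q, q̄, W) = ρ q − (1−ρh) λ (q̄ − q) −
  sup_{c ∈ C} { u(c) + (1−ρh)(1−λh)(1/h)(∑_k β_k(c) W_k − q) }`. -/
noncomputable def schemeOp (ρ h lam : ℝ) (C : Set ℝ) (u : ℝ → ℝ) (β : ℝ → ℕ → ℝ)
    (q qbar : ℝ) (W : ℕ → ℝ) : ℝ :=
  ρ * q - (1 - ρ * h) * lam * (qbar - q) -
    sSup {z : ℝ | ∃ c ∈ C,
      z = u c + (1 - ρ * h) * (1 - lam * h) * (1 / h) * ((∑' k, β c k * W k) - q)}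

/-- Monotonicity of the SL scheme operator. If `U ≤ V` pointwise with `U, V`
bounded, and `θ = q_j − m_j = max(q₁−m₁, q₂−m₂) ≥ 0`, then
`F(q_j, q_{j̄}, U + θ) − F(m_j, m_{j̄}, V) ≥ ρ θ`, provided the interpolation weights are
nonnegative and sum to one and the suprema involved are finite. -/
theorem stmt_9 (ρ h lam : ℝ) (hρ : 0 < ρ) (hh : 0 < h) (hρh : ρ * h < 1)
    (hlam0 : 0 ≤ lam) (hlamh : lam * h ≤ 1)
    (C : Set ℝ) (hC : C.Nonempty) (hCsub : C ⊆ Ici 0)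
    (u : ℝ → ℝ) (β : ℝ → ℕ → ℝ)
    (hβ0 : ∀ c k, 0 ≤ β c k) (hβ1 : ∀ c, HasSum (fun k => β c k) 1)
    (U V : ℕ → ℝ) (hUbd : ∃ M, ∀ k, |U k| ≤ M) (hVbd : ∃ M, ∀ k, |V k| ≤ M)
    (hUV : ∀ k, U k ≤ V k)
    (q m : Fin 2 → ℝ) (j : Fin 2) (θ : ℝ)
    (hθ : θ = q j - m j) (hθmax : θ = max (q 0 - m 0) (q 1 - m 1)) (hθ0 : 0 ≤ θ)
    (hbd1 : BddAbove {z : ℝ | ∃ c ∈ C,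
      z = u c + (1 - ρ * h) * (1 - lam * h) * (1 / h) *
        ((∑' k, β c k * (U k + θ)) - q j)})
    (hbd2 : BddAbove {z : ℝ | ∃ c ∈ C,
      z = u c + (1 - ρ * h) * (1 - lam * h) * (1 / h) * ((∑' k, β c k * V k) - m j)}) :
    schemeOp ρ h lam C u β (q j) (q (1 - j)) (fun k => U k + θ) -
      schemeOp ρ h lam C u β (m j) (m (1 - j)) V ≥ ρ * θ := by

  obtain ⟨M, hM⟩ := hUbd
  obtain ⟨N, hN⟩ := hVbd
  have hc1 : (0:ℝ) ≤ (1 - ρ * h) * lam := mul_nonneg (by linarith) hlam0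
  have ha0 : (0:ℝ) ≤ (1 - ρ * h) * (1 - lam * h) * (1 / h) :=
    mul_nonneg (mul_nonneg (by linarith) (by linarith)) (by positivity)
  have hsU : ∀ c, Summable (fun k => β c k * U k) := by
    intro c
    apply Summable.of_norm
    apply Summable.of_nonneg_of_le (fun k => norm_nonneg _) (fun k => ?_)
      ((hβ1 c).summable.mul_right M)
    rw [Real.norm_eq_abs, abs_mul, abs_of_nonneg (hβ0 c k)]
    exact mul_le_mul_of_nonneg_left (hM k) (hβ0 c k)
  have hsV : ∀ c, Summable (fun k => β c k * V k) := by
    intro c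
    apply Summable.of_norm
    apply Summable.of_nonneg_of_le (fun k => norm_nonneg _) (fun k => ?_)
      ((hβ1 c).summable.mul_right N)
    rw [Real.norm_eq_abs, abs_mul, abs_of_nonneg (hβ0 c k)]
    exact mul_le_mul_of_nonneg_left (hN k) (hβ0 c k)
  have htsum : ∀ c, (∑' k, β c k * (U k + θ)) = (∑' k, β c k * U k) + θ := by
    intro c
    have h1 : HasSum (fun k => β c k * θ) θ := by
      simpa using (hβ1 c).mul_right θ
    have h2 : HasSum (fun k => β c k * (U k + θ)) ((∑' k, β c k * U k) + θ) := by
      have := (hsU c).hasSum.add h1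
      simpa [mul_add] using this
    exact h2.tsum_eq
  -- sup comparison
  have hsup : sSup {z : ℝ | ∃ c ∈ C,
      z = u c + (1 - ρ * h) * (1 - lam * h) * (1 / h) *
        ((∑' k, β c k * (U k + θ)) - q j)} ≤
      sSup {z : ℝ | ∃ c ∈ C,
      z = u c + (1 - ρ * h) * (1 - lam * h) * (1 / h) * ((∑' k, β c k * V k) - m j)} := by
    obtain ⟨c₀, hc₀⟩ := hC
    refine csSup_le ⟨u c₀ + (1 - ρ * h) * (1 - lam * h) * (1 / h) *
      ((∑' k, β c₀ k * (U k + θ)) - q j), c₀, hc₀, rfl⟩ ?_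
    rintro x ⟨c, hcC, rfl⟩
    refine le_trans ?_ (le_csSup hbd2 ⟨c, hcC, rfl⟩)
    have hUVsum : (∑' k, β c k * U k) ≤ (∑' k, β c k * V k) :=
      Summable.tsum_le_tsum (fun k => mul_le_mul_of_nonneg_left (hUV k) (hβ0 c k)) (hsU c) (hsV c)
    have : (∑' k, β c k * (U k + θ)) - q j ≤ (∑' k, β c k * V k) - m j := by
      rw [htsum c, hθ]; linarith
    have := mul_le_mul_of_nonneg_left this ha0
    linarith
  have hbar : q (1 - j) - m (1 - j) ≤ θ := by
    have h0 : q 0 - m 0 ≤ θ := by rw [hθmax]; exact le_max_left _ _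
    have h1 : q 1 - m 1 ≤ θ := by rw [hθmax]; exact le_max_right _ _
    fin_cases j
    · simpa using h1
    · simpa using h0
  have hkey : (0:ℝ) ≤ (1 - ρ * h) * lam * ((m (1 - j) - m j) - (q (1 - j) - q j)) := by
    apply mul_nonneg hc1
    have : q j - m j = θ := hθ.symm
    linarith
  simp only [schemeOp]
  have hρθ : ρ * q j - ρ * m j = ρ * θ := by rw [hθ]; ring
  nlinarith [hsup, hkey, hρθ]
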